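/- (Lemma 5.3, cocoercivity of the smooth part with respect to the P-norm). Let H, G be real Hilbert spaces, K = H × G, L : H → G bounded linear, γ₁, γ₂ > 0, θ ≥ 0 with γ₁⁻¹ − (γ₂/4)θ²‖L‖² > 0, and P(x, y) = (γ₁⁻¹x − (θ/2)L*y, −(θ/2)Lx + γ₂⁻¹y) (so P is τ-strongly positive with τ = ½γ₁⁻¹ + ½γ₂⁻¹ − ½√(θ²‖L‖² + (γ₁⁻¹ − γ₂⁻¹)²), hence invertible). Let h : H → ℝ be convex and Fréchet differentiable with β_h-Lipschitz gradient (β_h > 0) and l⋆ : G → ℝ convex and Fréchet differentiable with β_l-Lipschitz gradient (β_l > 0), and define C : K → K by C(x, y) = (∇h(x), ∇l⋆(y)). Then C is β-cocoercive with respect to ‖·‖_P: for all z, z′ ∈ K, ⟨C z − C z′, z − z′⟩ ≥ β⟨C z − C z′, P⁻¹(C z − C z′)⟩, with β = τ·min{β_l⁻¹, β_h⁻¹}. Moreover, if ∇l⋆ ≡ 0 (the case l = ι_{{0}}), the same inequality holds with the larger constant β = β_h⁻¹(γ₁⁻¹ − (γ₂/4)θ²‖L‖²). -/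

import Mathlib

open scoped InnerProductSpace

open InnerProductSpace

section BH
variable {H : Type*} [NormedAddCommGroup H] [InnerProductSpace ℝ H] [CompleteSpace H]

lemma my_hasDerivAt_line (f : H → ℝ) (f' : H → H) (hgrad : ∀ x, HasGradientAt f (f' x) x)
    (x d : H) (t : ℝ) :
    HasDerivAt (fun s : ℝ => f (x + s • d)) ⟪f' (x + t • d), d⟫_ℝ t := by
  have hc : HasDerivAt (fun s : ℝ => x + s • d) d t := by
    simpa using ((hasDerivAt_id t).smul_const d).const_add x
  have hf : HasFDerivAt f (toDual ℝ H (f' (x + t • d))) (x + t • d) :=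
    hasGradientAt_iff_hasFDerivAt.mp (hgrad _)
  simpa [Function.comp_def, InnerProductSpace.toDual_apply_apply] using hf.comp_hasDerivAt t hc

lemma my_first_order (f : H → ℝ) (f' : H → H) (hconv : ConvexOn ℝ Set.univ f)
    (hgrad : ∀ x, HasGradientAt f (f' x) x) (x y : H) :
    f x + ⟪f' x, y - x⟫_ℝ ≤ f y := by
  set g : ℝ → ℝ := fun t => f (x + t • (y - x)) with hg
  have hgc : ConvexOn ℝ Set.univ g := by
    have := hconv.comp_affineMap (AffineMap.lineMap x y : ℝ →ᵃ[ℝ] H)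
    simp only [Set.preimage_univ] at this
    have heq : g = f ∘ (AffineMap.lineMap x y : ℝ →ᵃ[ℝ] H) := by
      funext t
      simp only [g, Function.comp_apply, AffineMap.lineMap_apply_module']
      rw [add_comm]
    rw [heq]; exact this
  have hd0 : HasDerivAt g ⟪f' x, y - x⟫_ℝ 0 := by
    simpa using my_hasDerivAt_line f f' hgrad x (y - x) 0
  have := hgc.le_slope_of_hasDerivAt (Set.mem_univ (0:ℝ)) (Set.mem_univ (1:ℝ)) one_pos hd0
  rw [slope_def_field] at this
  simp only [g] at this
  simp only [zero_smul, add_zero, one_smul] at this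
  have hx1 : x + (y - x) = y := by abel
  rw [hx1] at this
  linarith [this]
end BH

section BH2
variable {H : Type*} [NormedAddCommGroup H] [InnerProductSpace ℝ H] [CompleteSpace H]

lemma my_descent (f : H → ℝ) (f' : H → H) (β : ℝ) (hβ : 0 < β)
    (hgrad : ∀ x, HasGradientAt f (f' x) x)
    (hlip : ∀ a b, ‖f' a - f' b‖ ≤ β * ‖a - b‖) (x y : H) :
    f y ≤ f x + ⟪f' x, y - x⟫_ℝ + β / 2 * ‖y - x‖ ^ 2 := by
  set d := y - x with hd
  set c : ℝ := ⟪f' x, d⟫_ℝ with hc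
  set φ : ℝ → ℝ := fun t => f (x + t • d) - t * c - β / 2 * ‖d‖ ^ 2 * t ^ 2 with hφ
  have hφ' : ∀ t : ℝ, HasDerivAt φ
      (⟪f' (x + t • d), d⟫_ℝ - c - β / 2 * ‖d‖ ^ 2 * (2 * t ^ 1)) t := by
    intro t
    have := ((my_hasDerivAt_line f f' hgrad x d t).sub
      ((hasDerivAt_id t).mul_const c)).sub ((hasDerivAt_pow 2 t).const_mul (β / 2 * ‖d‖ ^ 2))
    simp at this ⊢
    exact this
  have hanti : AntitoneOn φ (Set.Icc 0 1) := by
    apply antitoneOn_of_hasDerivWithinAt_nonpos (convex_Icc 0 1)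
      (fun t _ => ((hφ' t).continuousAt).continuousWithinAt)
      (fun t _ => ((hφ' t).hasDerivWithinAt))
    intro t ht
    rw [interior_Icc] at ht
    have ht0 : 0 < t := ht.1
    have h1 : ⟪f' (x + t • d), d⟫_ℝ - c = ⟪f' (x + t • d) - f' x, d⟫_ℝ := by
      rw [inner_sub_left]
    have h2 : ⟪f' (x + t • d) - f' x, d⟫_ℝ ≤ β * t * ‖d‖ ^ 2 := by
      have hb := real_inner_le_norm (f' (x + t • d) - f' x) d
      have hl := hlip (x + t • d) x
      rw [add_sub_cancel_left, norm_smul, Real.norm_eq_abs, abs_of_pos ht0] at hl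
      nlinarith [norm_nonneg d, norm_nonneg (f' (x + t • d) - f' x)]
    rw [h1]
    nlinarith [h2]
  have h01 := hanti (Set.mem_Icc.2 ⟨le_refl 0, zero_le_one⟩)
    (Set.mem_Icc.2 ⟨zero_le_one, le_refl 1⟩) zero_le_one
  simp only [φ, zero_smul, add_zero, one_smul, zero_mul, one_pow, mul_one, zero_pow,
    mul_zero, sub_zero] at h01
  have hx1 : x + d = y := by rw [hd]; abel
  rw [hx1] at h01
  linarith

lemma my_bh_key (f : H → ℝ) (f' : H → H) (β : ℝ) (hβ : 0 < β)
    (hconv : ConvexOn ℝ Set.univ f) (hgrad : ∀ x, HasGradientAt f (f' x) x)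
    (hlip : ∀ a b, ‖f' a - f' b‖ ≤ β * ‖a - b‖) (x y : H) :
    f x + ⟪f' x, y - x⟫_ℝ + (2 * β)⁻¹ * ‖f' y - f' x‖ ^ 2 ≤ f y := by
  set g : H → ℝ := fun z => f z - ⟪f' x, z⟫_ℝ with hgdef
  set g' : H → H := fun z => f' z - f' x with hg'def
  have hgconv : ConvexOn ℝ Set.univ g := by
    refine ⟨convex_univ, fun a _ b _ p q hp hq hpq => ?_⟩
    have := hconv.2 (Set.mem_univ a) (Set.mem_univ b) hp hq hpq
    simp only [smul_eq_mul] at this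
    simp only [g, smul_eq_mul, inner_add_right, real_inner_smul_right]
    linarith
  have hgg : ∀ z, HasGradientAt g (g' z) z := by
    intro z
    rw [hasGradientAt_iff_hasFDerivAt]
    have h1 : HasFDerivAt f (toDual ℝ H (f' z)) z := hasGradientAt_iff_hasFDerivAt.mp (hgrad z)
    have h2 : HasFDerivAt (fun w : H => ⟪f' x, w⟫_ℝ) (toDual ℝ H (f' x)) z :=
      (toDual ℝ H (f' x)).hasFDerivAt
    have := h1.sub h2
    simp [g', map_sub] at this ⊢
    exact this
  have hglip : ∀ a b, ‖g' a - g' b‖ ≤ β * ‖a - b‖ := by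
    intro a b
    simpa [g', sub_sub_sub_cancel_right] using hlip a b
  set w : H := y - β⁻¹ • (f' y - f' x) with hw
  have hmin : g x ≤ g w := by
    have := my_first_order g g' hgconv hgg x w
    simp only [g', sub_self, inner_zero_left] at this
    linarith
  have hdes : g w ≤ g y + ⟪g' y, w - y⟫_ℝ + β / 2 * ‖w - y‖ ^ 2 :=
    my_descent g g' β hβ hgg hglip y w
  have hwy : w - y = -(β⁻¹ • (f' y - f' x)) := by rw [hw]; abel
  have e1 : ⟪g' y, w - y⟫_ℝ = -(β⁻¹ * ‖f' y - f' x‖ ^ 2) := by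
    simp only [g', hwy, inner_neg_right, real_inner_smul_right, real_inner_self_eq_norm_sq]
  have e2 : ‖w - y‖ ^ 2 = β⁻¹ ^ 2 * ‖f' y - f' x‖ ^ 2 := by
    rw [hwy, norm_neg, norm_smul, Real.norm_eq_abs, abs_of_pos (inv_pos.2 hβ), mul_pow]
  have hβne : β ≠ 0 := ne_of_gt hβ
  have hgx : g x = f x - ⟪f' x, x⟫_ℝ := rfl
  have hgy : g y = f y - ⟪f' x, y⟫_ℝ := rfl
  have hixy : ⟪f' x, y - x⟫_ℝ = ⟪f' x, y⟫_ℝ - ⟪f' x, x⟫_ℝ := by rw [inner_sub_right]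
  have hcomb : β / 2 * (β⁻¹ ^ 2 * ‖f' y - f' x‖ ^ 2) - β⁻¹ * ‖f' y - f' x‖ ^ 2
      = -((2 * β)⁻¹ * ‖f' y - f' x‖ ^ 2) := by
    field_simp
    ring
  rw [hgx] at hmin
  rw [hgy, e1, e2] at hdes
  have hfin : f x - ⟪f' x, x⟫_ℝ ≤ f y - ⟪f' x, y⟫_ℝ - (2 * β)⁻¹ * ‖f' y - f' x‖ ^ 2 := by
    calc f x - ⟪f' x, x⟫_ℝ ≤ f y - ⟪f' x, y⟫_ℝ + -(β⁻¹ * ‖f' y - f' x‖ ^ 2)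
        + β / 2 * (β⁻¹ ^ 2 * ‖f' y - f' x‖ ^ 2) := le_trans hmin hdes
      _ = f y - ⟪f' x, y⟫_ℝ - (2 * β)⁻¹ * ‖f' y - f' x‖ ^ 2 := by
        field_simp
        ring
  rw [hixy]
  linarith

lemma my_bh (f : H → ℝ) (f' : H → H) (β : ℝ) (hβ : 0 < β)
    (hconv : ConvexOn ℝ Set.univ f) (hgrad : ∀ x, HasGradientAt f (f' x) x)
    (hlip : ∀ a b, ‖f' a - f' b‖ ≤ β * ‖a - b‖) (x y : H) :
    β⁻¹ * ‖f' x - f' y‖ ^ 2 ≤ ⟪f' x - f' y, x - y⟫_ℝ := by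
  have h1 := my_bh_key f f' β hβ hconv hgrad hlip x y
  have h2 := my_bh_key f f' β hβ hconv hgrad hlip y x
  have hn : ‖f' y - f' x‖ = ‖f' x - f' y‖ := norm_sub_rev _ _
  rw [hn] at h1
  have e1 : ⟪f' x - f' y, x - y⟫_ℝ = ⟪f' x, x - y⟫_ℝ - ⟪f' y, x - y⟫_ℝ := inner_sub_left _ _ _
  have e2 : ⟪f' x, y - x⟫_ℝ = -⟪f' x, x - y⟫_ℝ := by
    rw [← inner_neg_right]; congr 1; abel
  have hβinv : (2 * β)⁻¹ + (2 * β)⁻¹ = β⁻¹ := by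
    rw [← two_mul]
    rw [mul_inv]
    field_simp
  have hβN : (2 * β)⁻¹ * ‖f' x - f' y‖ ^ 2 + (2 * β)⁻¹ * ‖f' x - f' y‖ ^ 2
      = β⁻¹ * ‖f' x - f' y‖ ^ 2 := by rw [← add_mul, hβinv]
  rw [e2] at h1
  rw [e1]
  linarith
end BH2

lemma my_eig_lower (a d c s t : ℝ) (hs : 0 ≤ s) (ht : 0 ≤ t) (hc : 0 ≤ c) (τ : ℝ)
    (hτ : τ = 1/2 * a + 1/2 * d - 1/2 * Real.sqrt ((2*c)^2 + (a-d)^2)) :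
    τ * (s^2 + t^2) ≤ a * s^2 + d * t^2 - 2*c*s*t := by
  set S := Real.sqrt ((2*c)^2 + (a-d)^2) with hSdef
  have hS0 : 0 ≤ S := Real.sqrt_nonneg _
  have hS2 : S^2 = (2*c)^2 + (a-d)^2 := Real.sq_sqrt (by positivity)
  have hA : 0 ≤ a - τ := by
    rw [hτ]
    nlinarith [hS0, hS2, sq_nonneg c, sq_nonneg (S + a - d)]
  have hD : 0 ≤ d - τ := by
    rw [hτ]
    nlinarith [hS0, hS2, sq_nonneg c, sq_nonneg (S + d - a)]
  have hAD : (a - τ) * (d - τ) = c^2 := by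
    rw [hτ]; nlinarith [hS2]
  have hcs : c = Real.sqrt (a - τ) * Real.sqrt (d - τ) := by
    rw [← Real.sqrt_mul hA, hAD, Real.sqrt_sq hc]
  nlinarith [sq_nonneg (Real.sqrt (a - τ) * s - Real.sqrt (d - τ) * t),
    Real.sq_sqrt hA, Real.sq_sqrt hD, mul_nonneg hs ht,
    Real.sqrt_nonneg (a - τ), Real.sqrt_nonneg (d - τ)]

lemma my_coco_scalar {τ N Q M : ℝ} (hτ : 0 < τ) (h1 : τ * N ≤ Q) (h2 : Q^2 ≤ M * N)
    (hN : 0 ≤ N) (hM : 0 ≤ M) : τ * Q ≤ M := by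
  rcases eq_or_lt_of_le hN with hN0 | hN0
  · have hQ0 : Q^2 ≤ 0 := by rw [← hN0] at h2; linarith
    have hQ : Q = 0 := by nlinarith [sq_nonneg Q]
    rw [hQ, mul_zero]; exact hM
  · have hQpos : 0 < Q := lt_of_lt_of_le (mul_pos hτ hN0) h1
    have h3 : τ^2 * N ≤ M := by
      have hb := mul_self_le_mul_self (mul_nonneg hτ.le hN) h1
      have : τ^2 * N^2 ≤ Q^2 := by nlinarith [hb]
      have h4 : τ^2 * N^2 ≤ M * N := le_trans this h2
      nlinarith
    nlinarith [sq_nonneg (τ * Q - M)]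

lemma my_cs2 {E F : Type*} [NormedAddCommGroup E] [InnerProductSpace ℝ E]
    [NormedAddCommGroup F] [InnerProductSpace ℝ F] (a c : E) (b d : F) :
    (⟪a, c⟫_ℝ + ⟪b, d⟫_ℝ)^2 ≤ (‖a‖^2 + ‖b‖^2) * (‖c‖^2 + ‖d‖^2) := by
  have hp := abs_real_inner_le_norm a c
  have hq := abs_real_inner_le_norm b d
  have habs : |⟪a, c⟫_ℝ + ⟪b, d⟫_ℝ| ≤ ‖a‖ * ‖c‖ + ‖b‖ * ‖d‖ :=
    (abs_add_le _ _).trans (add_le_add hp hq)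
  have h1 : (⟪a, c⟫_ℝ + ⟪b, d⟫_ℝ)^2 ≤ (‖a‖ * ‖c‖ + ‖b‖ * ‖d‖)^2 := by
    rw [← sq_abs]
    exact pow_le_pow_left₀ (abs_nonneg _) habs 2
  nlinarith [sq_nonneg (‖a‖ * ‖d‖ - ‖b‖ * ‖c‖), h1]


/-- Lemma 5.3: cocoercivity of the smooth part `C(x,y) = (∇h(x), ∇l⋆(y))` with respect to
the `P`-norm, where `P(x,y) = (γ₁⁻¹x − (θ/2)L*y, −(θ/2)Lx + γ₂⁻¹y)` (given together with
its inverse `Pinv`), the inner product on `K = H × G` is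
`⟨(x,y),(x',y')⟩ = ⟨x,x'⟩ + ⟨y,y'⟩`, and `‖w‖²_{P⁻¹} = ⟨w, P⁻¹w⟩`. -/
theorem smooth_part_cocoercive
    {H G : Type*} [NormedAddCommGroup H] [InnerProductSpace ℝ H] [CompleteSpace H]
    [NormedAddCommGroup G] [InnerProductSpace ℝ G] [CompleteSpace G]
    (L : H →L[ℝ] G) (γ₁ γ₂ θ : ℝ) (hγ₁ : 0 < γ₁) (hγ₂ : 0 < γ₂) (hθ : 0 ≤ θ)
    (hcond : 0 < γ₁⁻¹ - γ₂ / 4 * θ ^ 2 * ‖L‖ ^ 2)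
    (τ : ℝ)
    (hτdef : τ = 1/2 * γ₁⁻¹ + 1/2 * γ₂⁻¹ -
      1/2 * Real.sqrt (θ ^ 2 * ‖L‖ ^ 2 + (γ₁⁻¹ - γ₂⁻¹) ^ 2))
    (Pf Pinv : H × G → H × G)
    (hPf : ∀ w : H × G,
      Pf w = (γ₁⁻¹ • w.1 - (θ/2) • (ContinuousLinearMap.adjoint L) w.2,
        -((θ/2) • L w.1) + γ₂⁻¹ • w.2))
    (hPinv : ∀ w : H × G, Pf (Pinv w) = w ∧ Pinv (Pf w) = w)
    (h : H → ℝ) (h' : H → H) (βh : ℝ) (hβh : 0 < βh)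
    (hconv : ConvexOn ℝ Set.univ h)
    (hgrad : ∀ x, HasGradientAt h (h' x) x)
    (hlip : ∀ x x', ‖h' x - h' x'‖ ≤ βh * ‖x - x'‖)
    (lstar : G → ℝ) (l' : G → G) (βl : ℝ) (hβl : 0 < βl)
    (hconvl : ConvexOn ℝ Set.univ lstar)
    (hgradl : ∀ y, HasGradientAt lstar (l' y) y)
    (hlipl : ∀ y y', ‖l' y - l' y'‖ ≤ βl * ‖y - y'‖)
    (Cf : H × G → H × G) (hCf : ∀ w : H × G, Cf w = (h' w.1, l' w.2)) :
    (∀ z z' : H × G,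
      (τ * min βl⁻¹ βh⁻¹) *
        (⟪(Cf z - Cf z').1, (Pinv (Cf z - Cf z')).1⟫_ℝ +
         ⟪(Cf z - Cf z').2, (Pinv (Cf z - Cf z')).2⟫_ℝ) ≤
      ⟪(Cf z - Cf z').1, (z - z').1⟫_ℝ + ⟪(Cf z - Cf z').2, (z - z').2⟫_ℝ) ∧
    ((∀ y, l' y = 0) → ∀ z z' : H × G,
      (βh⁻¹ * (γ₁⁻¹ - γ₂ / 4 * θ ^ 2 * ‖L‖ ^ 2)) *
        (⟪(Cf z - Cf z').1, (Pinv (Cf z - Cf z')).1⟫_ℝ +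
         ⟪(Cf z - Cf z').2, (Pinv (Cf z - Cf z')).2⟫_ℝ) ≤
      ⟪(Cf z - Cf z').1, (z - z').1⟫_ℝ + ⟪(Cf z - Cf z').2, (z - z').2⟫_ℝ) := by
  have hγ₁' : 0 < γ₁⁻¹ := inv_pos.2 hγ₁
  have hγ₂' : 0 < γ₂⁻¹ := inv_pos.2 hγ₂
  -- quadratic form lower bound : P ⪰ τ
  have key : ∀ w : H × G, τ * (‖w.1‖^2 + ‖w.2‖^2)
      ≤ ⟪w.1, (Pf w).1⟫_ℝ + ⟪w.2, (Pf w).2⟫_ℝ := by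
    intro w
    rw [hPf]
    have e : ⟪w.1, γ₁⁻¹ • w.1 - (θ/2) • (ContinuousLinearMap.adjoint L) w.2⟫_ℝ
        + ⟪w.2, -((θ/2) • L w.1) + γ₂⁻¹ • w.2⟫_ℝ
        = γ₁⁻¹ * ‖w.1‖^2 + γ₂⁻¹ * ‖w.2‖^2 - θ * ⟪L w.1, w.2⟫_ℝ := by
      simp only [inner_sub_right, inner_add_right, inner_neg_right, real_inner_smul_right,
        real_inner_self_eq_norm_sq, ContinuousLinearMap.adjoint_inner_right]
      rw [real_inner_comm w.2 (L w.1)]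
      ring
    rw [e]
    have hCS : ⟪L w.1, w.2⟫_ℝ ≤ ‖L‖ * ‖w.1‖ * ‖w.2‖ := by
      calc ⟪L w.1, w.2⟫_ℝ ≤ ‖L w.1‖ * ‖w.2‖ := real_inner_le_norm _ _
        _ ≤ ‖L‖ * ‖w.1‖ * ‖w.2‖ :=
          mul_le_mul_of_nonneg_right (L.le_opNorm w.1) (norm_nonneg _)
    have hmul : θ * ⟪L w.1, w.2⟫_ℝ ≤ θ * (‖L‖ * ‖w.1‖ * ‖w.2‖) :=
      mul_le_mul_of_nonneg_left hCS hθ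
    have harg : θ^2 * ‖L‖^2 + (γ₁⁻¹ - γ₂⁻¹)^2
        = (2 * (θ * ‖L‖ / 2))^2 + (γ₁⁻¹ - γ₂⁻¹)^2 := by ring
    have heig := my_eig_lower γ₁⁻¹ γ₂⁻¹ (θ * ‖L‖ / 2) ‖w.1‖ ‖w.2‖ (norm_nonneg _)
      (norm_nonneg _) (by positivity) τ (by rw [hτdef, harg])
    nlinarith [heig, hmul]
  -- positivity of τ
  have hτpos : 0 < τ := by
    have hineq : θ^2 * ‖L‖^2 < 4 * γ₁⁻¹ * γ₂⁻¹ := by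
      have h4 : γ₂ * γ₂⁻¹ = 1 := mul_inv_cancel₀ (ne_of_gt hγ₂)
      nlinarith [hcond, hγ₂']
    have hlt : Real.sqrt (θ^2 * ‖L‖^2 + (γ₁⁻¹ - γ₂⁻¹)^2) < γ₁⁻¹ + γ₂⁻¹ := by
      apply (Real.sqrt_lt' (by positivity)).2
      nlinarith
    rw [hτdef]; linarith
  constructor
  · -- Part 1
    intro z z'
    have hu1 : (Cf z - Cf z').1 = h' z.1 - h' z'.1 := by simp [hCf]
    have hu2 : (Cf z - Cf z').2 = l' z.2 - l' z'.2 := by simp [hCf]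
    set w := Pinv (Cf z - Cf z') with hwdef
    have hPfw : Pf w = Cf z - Cf z' := (hPinv _).1
    have hτN : τ * (‖w.1‖^2 + ‖w.2‖^2)
        ≤ ⟪(Cf z - Cf z').1, w.1⟫_ℝ + ⟪(Cf z - Cf z').2, w.2⟫_ℝ := by
      have hk := key w
      rw [hPfw] at hk
      have c1 : ⟪w.1, (Cf z - Cf z').1⟫_ℝ = ⟪(Cf z - Cf z').1, w.1⟫_ℝ := real_inner_comm _ _
      have c2 : ⟪w.2, (Cf z - Cf z').2⟫_ℝ = ⟪(Cf z - Cf z').2, w.2⟫_ℝ := real_inner_comm _ _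
      rw [c1, c2] at hk
      exact hk
    have hCS2 := my_cs2 (Cf z - Cf z').1 w.1 (Cf z - Cf z').2 w.2
    have hτQ := my_coco_scalar hτpos hτN hCS2 (by positivity) (by positivity)
    have hh := my_bh h h' βh hβh hconv hgrad hlip z.1 z'.1
    have hl := my_bh lstar l' βl hβl hconvl hgradl hlipl z.2 z'.2
    rw [hu1, hu2, Prod.fst_sub, Prod.snd_sub]
    set m := min βl⁻¹ βh⁻¹ with hm
    have hm0 : 0 ≤ m := le_min (inv_nonneg.2 hβl.le) (inv_nonneg.2 hβh.le)
    have hm1 : m * ‖h' z.1 - h' z'.1‖^2 ≤ βh⁻¹ * ‖h' z.1 - h' z'.1‖^2 :=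
      mul_le_mul_of_nonneg_right (min_le_right _ _) (sq_nonneg _)
    have hm2 : m * ‖l' z.2 - l' z'.2‖^2 ≤ βl⁻¹ * ‖l' z.2 - l' z'.2‖^2 :=
      mul_le_mul_of_nonneg_right (min_le_left _ _) (sq_nonneg _)
    rw [hu1, hu2] at hτQ
    have hmQ := mul_le_mul_of_nonneg_left hτQ hm0
    linarith [hmQ, hm1, hm2, hh, hl]
  · -- Part 2
    intro hl0 z z'
    set δ : ℝ := γ₁⁻¹ - γ₂ / 4 * θ ^ 2 * ‖L‖ ^ 2 with hδdef
    have hzero : Cf z - Cf z' = ((h' z.1 - h' z'.1 : H), (0 : G)) := by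
      rw [hCf z, hCf z']
      rw [Prod.mk_sub_mk, hl0, hl0, sub_zero]
    set u : H := h' z.1 - h' z'.1 with hudef
    rw [hzero]
    set w := Pinv (u, (0:G)) with hwdef
    have hPfw : Pf w = (u, (0:G)) := (hPinv _).1
    rw [hPf] at hPfw
    rw [Prod.mk.injEq] at hPfw
    obtain ⟨e1, e2⟩ := hPfw
    have hw2 : w.2 = (γ₂ * (θ/2)) • L w.1 := by
      have hstep : γ₂⁻¹ • w.2 = (θ/2) • L w.1 := by
        have := e2
        rw [neg_add_eq_zero] at this
        exact this.symm
      calc w.2 = γ₂ • (γ₂⁻¹ • w.2) := by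
            rw [smul_smul, mul_inv_cancel₀ hγ₂.ne', one_smul]
        _ = γ₂ • ((θ/2) • L w.1) := by rw [hstep]
        _ = (γ₂ * (θ/2)) • L w.1 := smul_smul _ _ _
    have hQform : ⟪u, w.1⟫_ℝ
        = γ₁⁻¹ * ‖w.1‖^2 - (θ/2) * (γ₂ * (θ/2)) * ‖L w.1‖^2 := by
      rw [← e1, inner_sub_left, real_inner_smul_left, real_inner_smul_left,
        real_inner_self_eq_norm_sq, ContinuousLinearMap.adjoint_inner_left, hw2,
        real_inner_smul_left, real_inner_self_eq_norm_sq]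
      ring
    have hδpos : 0 < δ := hcond
    have hNQ : δ * ‖w.1‖^2 ≤ ⟪u, w.1⟫_ℝ := by
      have hL1 : ‖L w.1‖^2 ≤ ‖L‖^2 * ‖w.1‖^2 := by
        have hop := L.le_opNorm w.1
        calc ‖L w.1‖^2 = ‖L w.1‖ * ‖L w.1‖ := pow_two _
          _ ≤ (‖L‖ * ‖w.1‖) * (‖L‖ * ‖w.1‖) := mul_self_le_mul_self (norm_nonneg _) hop
          _ = ‖L‖^2 * ‖w.1‖^2 := by ring
      have hcoef : (0:ℝ) ≤ γ₂ * θ^2 / 4 := by positivity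
      have hscaled := mul_le_mul_of_nonneg_left hL1 hcoef
      rw [hQform, hδdef]
      linarith [hscaled]
    have hQ2 : (⟪u, w.1⟫_ℝ)^2 ≤ ‖u‖^2 * ‖w.1‖^2 := by
      have habs := abs_real_inner_le_norm u w.1
      calc (⟪u, w.1⟫_ℝ)^2 = |⟪u, w.1⟫_ℝ|^2 := (sq_abs _).symm
        _ ≤ (‖u‖ * ‖w.1‖)^2 := pow_le_pow_left₀ (abs_nonneg _) habs 2
        _ = ‖u‖^2 * ‖w.1‖^2 := by ring
    have hδQ := my_coco_scalar hδpos hNQ hQ2 (sq_nonneg _) (sq_nonneg _)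
    have hh := my_bh h h' βh hβh hconv hgrad hlip z.1 z'.1
    rw [Prod.fst_sub, Prod.snd_sub]
    simp only [inner_zero_left, add_zero]
    have hβh' : (0:ℝ) ≤ βh⁻¹ := inv_nonneg.2 hβh.le
    have hfin := mul_le_mul_of_nonneg_left hδQ hβh'
    linarith [hfin, hh]
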